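/- Perturbed consensus with vanishing perturbations achieves consensus: suppose the matrices W(k) satisfy the network assumptions, D ≥ 0, ι : ℕ → [0,∞) satisfies ι(k) → 0, and x_i : ℕ → ℝ^p, p_i : ℕ → ℝ^p (i = 1,…,n) satisfy x_i(k+1) = Σ_{j=1}^n W(k)_{ij} x_j(k) + p_i(k+1) with ‖p_i(k+1)‖ ≤ ι(k)·D for all i and k ≥ 0. Then, with x̄(k) = (1/n) Σ_{j=1}^n x_j(k), lim_{k→∞} ‖x_i(k) − x̄(k)‖ = 0 for every i. -/

import Mathlib

open Filter Finset

lemma pairing_bound {E : Type*} [NormedAddCommGroup E] [NormedSpace ℝ E]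
    {n : ℕ} (c d : Fin n → ℝ) (hc : ∀ l, 0 ≤ c l) (hd : ∀ l, 0 ≤ d l)
    (t : ℝ) (hct : ∑ l, c l = t) (hdt : ∑ l, d l = t)
    (v : Fin n → E) (V : ℝ) (hV : ∀ l m, ‖v l - v m‖ ≤ V) :
    ‖(∑ l, c l • v l) - ∑ l, d l • v l‖ ≤ t * V := by
  have ht0 : 0 ≤ t := hct ▸ Finset.sum_nonneg fun l _ => hc l
  rcases eq_or_lt_of_le ht0 with h0 | ht
  · have hc0 : ∀ l ∈ Finset.univ, c l = 0 :=
      (Finset.sum_eq_zero_iff_of_nonneg fun l _ => hc l).1 (hct.trans h0.symm)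
    have hd0 : ∀ l ∈ Finset.univ, d l = 0 :=
      (Finset.sum_eq_zero_iff_of_nonneg fun l _ => hd l).1 (hdt.trans h0.symm)
    have : (∑ l, c l • v l) - ∑ l, d l • v l = 0 := by
      rw [Finset.sum_eq_zero fun l hl => by rw [hc0 l hl, zero_smul],
        Finset.sum_eq_zero fun l hl => by rw [hd0 l hl, zero_smul], sub_zero]
    simp [this, ← h0]
  · have key : t • ((∑ l, c l • v l) - ∑ l, d l • v l)
      = ∑ l, ∑ m, (c l * d m) • (v l - v m) := by
    
      have h1 : ∑ l, ∑ m, (c l * d m) • v l = t • ∑ l, c l • v l := by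
        rw [Finset.smul_sum]
        refine Finset.sum_congr rfl fun l _ => ?_
        rw [← Finset.sum_smul, ← Finset.mul_sum, hdt, mul_comm, ← smul_smul]
      have h2 : ∑ l, ∑ m, (c l * d m) • v m = t • ∑ m, d m • v m := by
        rw [Finset.sum_comm, Finset.smul_sum]
        refine Finset.sum_congr rfl fun m _ => ?_
        rw [← Finset.sum_smul, ← Finset.sum_mul, hct, mul_comm, ← smul_smul, smul_comm]
      calc t • ((∑ l, c l • v l) - ∑ l, d l • v l)
          = t • ∑ l, c l • v l - t • ∑ m, d m • v m := by rw [smul_sub]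
        _ = (∑ l, ∑ m, (c l * d m) • v l) - ∑ l, ∑ m, (c l * d m) • v m := by
            rw [h1, h2]
        _ = ∑ l, ∑ m, (c l * d m) • (v l - v m) := by
            rw [← Finset.sum_sub_distrib]
            refine Finset.sum_congr rfl fun l _ => ?_
            rw [← Finset.sum_sub_distrib]
            refine Finset.sum_congr rfl fun m _ => ?_
            rw [smul_sub]
    have hb : ‖t • ((∑ l, c l • v l) - ∑ l, d l • v l)‖ ≤ t * (t * V) := by
      rw [key]
      calc ‖∑ l, ∑ m, (c l * d m) • (v l - v m)‖
          ≤ ∑ l, ∑ m, ‖(c l * d m) • (v l - v m)‖ := by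
            refine (norm_sum_le _ _).trans (Finset.sum_le_sum fun l _ => norm_sum_le _ _)
        _ ≤ ∑ l, ∑ m, (c l * d m) * V := by
            refine Finset.sum_le_sum fun l _ => Finset.sum_le_sum fun m _ => ?_
            rw [norm_smul, Real.norm_eq_abs, abs_of_nonneg (mul_nonneg (hc l) (hd m))]
            exact mul_le_mul_of_nonneg_left (hV l m) (mul_nonneg (hc l) (hd m))
        _ = ∑ l, c l * (t * V) := by
            refine Finset.sum_congr rfl fun l _ => ?_
            simp_rw [mul_assoc, ← Finset.mul_sum, ← Finset.sum_mul, hdt]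
        _ = t * (t * V) := by rw [← Finset.sum_mul, hct]
    rw [norm_smul, Real.norm_eq_abs, abs_of_pos ht] at hb
    calc ‖(∑ l, c l • v l) - ∑ l, d l • v l‖
        = t⁻¹ * (t * ‖(∑ l, c l • v l) - ∑ l, d l • v l‖) := by
          field_simp
      _ ≤ t⁻¹ * (t * (t * V)) := by
          exact mul_le_mul_of_nonneg_left hb (inv_nonneg.2 ht0)
      _ = t * V := by field_simp


lemma contraction_tendsto (κ : ℕ) (hκ : 0 < κ) (γ : ℝ) (hγ0 : 0 ≤ γ) (hγ1 : γ < 1)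
    (u e : ℕ → ℝ) (hu : ∀ k, 0 ≤ u k) (he : Tendsto e atTop (nhds 0))
    (hrec : ∀ k, u (k + κ) ≤ γ * u k + e k) :
    Tendsto u atTop (nhds 0) := by
  rw [Metric.tendsto_atTop]
  intro ε hε
  have hε2 : 0 < (1 - γ) * ε / 2 := by nlinarith
  obtain ⟨K, hK⟩ := (Metric.tendsto_atTop.1 he) ((1 - γ) * ε / 2) hε2
  have heK : ∀ k ≥ K, e k ≤ (1 - γ) * ε / 2 := by
    intro k hk
    have := hK k hk
    rw [Real.dist_eq, sub_zero] at this
    exact (le_abs_self _).trans this.le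
  set M : ℝ := ∑ r ∈ Finset.range κ, u (K + r) with hM
  have hM0 : 0 ≤ M := Finset.sum_nonneg fun r _ => hu _
  have hMle : ∀ r < κ, u (K + r) ≤ M :=
    fun r hr => Finset.single_le_sum (fun r _ => hu (K + r)) (Finset.mem_range.2 hr)
  -- invariant
  have inv : ∀ m, ∀ k, K ≤ k → u (k + m * κ) ≤ γ ^ m * u k + ε / 2 := by
    intro m
    induction m with
    | zero =>
      intro k hk
      simp only [Nat.zero_eq, zero_mul, add_zero, pow_zero, one_mul]
      linarith
    | succ m ih =>
      intro k hk
      have h1 : u (k + (m + 1) * κ) = u ((k + m * κ) + κ) := by ring_nf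
      have h2 := hrec (k + m * κ)
      have h3 := ih k hk
      have h4 : e (k + m * κ) ≤ (1 - γ) * ε / 2 := heK _ (le_trans hk (Nat.le_add_right _ _))
      calc u (k + (m + 1) * κ) = u ((k + m * κ) + κ) := h1
        _ ≤ γ * u (k + m * κ) + e (k + m * κ) := h2
        _ ≤ γ * (γ ^ m * u k + ε / 2) + (1 - γ) * ε / 2 := by
            exact add_le_add (mul_le_mul_of_nonneg_left h3 hγ0) h4
        _ = γ ^ (m + 1) * u k + (γ * ε / 2 + (1 - γ) * ε / 2) := by ring
        _ ≤ γ ^ (m + 1) * u k + ε / 2 := by nlinarith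
  -- choose m0
  obtain ⟨m0, hm0⟩ := ((tendsto_pow_atTop_nhds_zero_of_lt_one hγ0 hγ1).eventually
    (eventually_lt_nhds (show (0:ℝ) < ε / 2 / (M + 1) by positivity))).exists
  refine ⟨K + m0 * κ, fun k hk => ?_⟩
  rw [Real.dist_eq, sub_zero, abs_of_nonneg (hu k)]
  set t := k - K with htdef
  have hkt : k = (K + t % κ) + (t / κ) * κ := by
    have h1 : K ≤ k := le_trans (Nat.le_add_right _ _) hk
    have h1' := Nat.div_add_mod t κ
    have h2' : (t / κ) * κ = κ * (t / κ) := Nat.mul_comm _ _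
    omega
  have hm0le : m0 ≤ t / κ := by
    have : m0 * κ ≤ t := by omega
    exact Nat.le_div_iff_mul_le hκ |>.2 this
  have h5 := inv (t / κ) (K + t % κ) (Nat.le_add_right _ _)
  rw [← hkt] at h5
  have h6 : γ ^ (t / κ) * u (K + t % κ) ≤ γ ^ m0 * (M + 1) := by
    have hp : γ ^ (t / κ) ≤ γ ^ m0 := pow_le_pow_of_le_one hγ0 hγ1.le hm0le
    have hub : u (K + t % κ) ≤ M + 1 := (hMle _ (Nat.mod_lt _ hκ)).trans (by linarith)
    exact mul_le_mul hp hub (hu _) (pow_nonneg hγ0 _)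
  have h7 : γ ^ m0 * (M + 1) < ε / 2 := by
    rw [← lt_div_iff₀ (by positivity)]
    exact hm0
  linarith


def prodW {n : ℕ} (W : ℕ → Matrix (Fin n) (Fin n) ℝ) : ℕ → ℕ → Matrix (Fin n) (Fin n) ℝ
  | _, 0 => 1
  | k, (m+1) => W (k + m) * prodW W k m

section prodW

variable {n : ℕ} (W : ℕ → Matrix (Fin n) (Fin n) ℝ)

lemma prodW_nonneg (hW : ∀ k i j, 0 ≤ W k i j) (k m : ℕ) (i j : Fin n) :
    0 ≤ prodW W k m i j := by
  induction m generalizing i j with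
  | zero => simp [prodW, Matrix.one_apply]; positivity
  | succ m ih =>
    simp only [prodW, Matrix.mul_apply]
    exact Finset.sum_nonneg fun l _ => mul_nonneg (hW _ _ _) (ih _ _)

lemma prodW_row (hWrow : ∀ k i, ∑ j, W k i j = 1) (k m : ℕ) (i : Fin n) :
    ∑ j, prodW W k m i j = 1 := by
  induction m generalizing i with
  | zero => simp [prodW, Matrix.one_apply]
  | succ m ih =>
    simp only [prodW, Matrix.mul_apply]
    rw [Finset.sum_comm]
    calc ∑ l, ∑ j, W (k+m) i l * prodW W k m l j
        = ∑ l, W (k+m) i l * ∑ j, prodW W k m l j := by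
          simp_rw [Finset.mul_sum]
      _ = 1 := by simp_rw [ih]; simpa using hWrow (k+m) i

lemma prodW_add (k a b : ℕ) :
    prodW W k (a + b) = prodW W (k + a) b * prodW W k a := by
  induction b with
  | zero => simp [prodW]
  | succ b ih =>
    show W (k + (a + b)) * prodW W k (a + b)
        = (W (k + a + b) * prodW W (k + a) b) * prodW W k a
    rw [ih, Matrix.mul_assoc, ← Nat.add_assoc]

lemma prodW_entry_mul_ge (A B : Matrix (Fin n) (Fin n) ℝ)
    (hA : ∀ i j, 0 ≤ A i j) (hB : ∀ i j, 0 ≤ B i j) (i l j : Fin n) :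
    A i l * B l j ≤ (A * B) i j := by
  rw [Matrix.mul_apply]
  exact Finset.single_le_sum (f := fun m => A i m * B m j)
    (fun m _ => mul_nonneg (hA _ _) (hB _ _)) (Finset.mem_univ l)

lemma prodW_diag {η : ℝ} (hη0 : 0 ≤ η) (hW : ∀ k i j, 0 ≤ W k i j)
    (hWdiag : ∀ k i, η ≤ W k i i) (k m : ℕ) (i : Fin n) :
    η ^ m ≤ prodW W k m i i := by
  induction m with
  | zero => simp [prodW, Matrix.one_apply]
  | succ m ih =>
    calc η ^ (m+1) = η * η ^ m := by ring
      _ ≤ W (k+m) i i * prodW W k m i i :=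
          mul_le_mul (hWdiag _ _) ih (pow_nonneg hη0 _) (hW _ _ _)
      _ ≤ (W (k+m) * prodW W k m) i i :=
          prodW_entry_mul_ge (W (k+m)) (prodW W k m) (fun _ _ => hW _ _ _)
            (fun _ _ => prodW_nonneg W hW _ _ _ _) i i i
      _ = prodW W k (m+1) i i := rfl

lemma prodW_entry_ge {η : ℝ} (hη : η ∈ Set.Ioo (0:ℝ) 1) {κ : ℕ} (hκ : 1 ≤ κ)
    (hW : ∀ k i j, 0 ≤ W k i j)
    (hWdiag : ∀ k i, η ≤ W k i i)
    (hWconn : ∀ k, ∀ i j : Fin n, ∃ s, k ≤ s ∧ s < k + κ ∧ η ≤ W s i j)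
    (k : ℕ) (i j : Fin n) : η ^ κ ≤ prodW W k κ i j := by
  obtain ⟨s, hks, hsk, hWs⟩ := hWconn k i j
  set a := s - k with ha
  set b := κ - a - 1 with hb
  have hκab : κ = a + (1 + b) := by omega
  have hka : k + a = s := by omega
  have hnn : ∀ (k' m : ℕ) (i' j' : Fin n), 0 ≤ prodW W k' m i' j' :=
    fun k' m i' j' => prodW_nonneg W hW k' m i' j'
  have hdecomp : prodW W k κ = prodW W (s+1) b * (W s * prodW W k a) := by
    have hs1 : prodW W s 1 = W s := by
      show W (s + 0) * 1 = W s
      rw [Nat.add_zero, Matrix.mul_one]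
    rw [hκab, prodW_add, hka, prodW_add W s 1 b, hs1, Matrix.mul_assoc]
  have h1 : η ^ b * (W s i j * prodW W k a j j) ≤ prodW W k κ i j := by
    rw [hdecomp]
    calc η ^ b * (W s i j * prodW W k a j j)
        ≤ prodW W (s+1) b i i * (W s i j * prodW W k a j j) := by
          refine mul_le_mul_of_nonneg_right (prodW_diag W hη.1.le hW hWdiag _ _ _) ?_
          exact mul_nonneg (hW _ _ _) (hnn _ _ _ _)
      _ ≤ prodW W (s+1) b i i * (W s * prodW W k a) i j := by
          refine mul_le_mul_of_nonneg_left ?_ (hnn _ _ _ _)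
          exact prodW_entry_mul_ge (W s) (prodW W k a) (fun _ _ => hW _ _ _)
            (fun _ _ => hnn _ _ _ _) i j j
      _ ≤ (prodW W (s+1) b * (W s * prodW W k a)) i j := by
          refine prodW_entry_mul_ge (prodW W (s+1) b) (W s * prodW W k a)
            (fun _ _ => hnn _ _ _ _) ?_ i i j
          intro i' j'
          rw [Matrix.mul_apply]
          exact Finset.sum_nonneg fun l _ => mul_nonneg (hW _ _ _) (hnn _ _ _ _)
  refine le_trans ?_ h1
  have : η ^ κ = η ^ b * (η * η ^ a) := by rw [hκab]; ring
  rw [this]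
  refine mul_le_mul_of_nonneg_left ?_ (pow_nonneg hη.1.le _)
  exact mul_le_mul hWs (prodW_diag W hη.1.le hW hWdiag _ _ _) (pow_nonneg hη.1.le _)
    (hW _ _ _)

end prodW

lemma state_decomp {p n : ℕ} (W : ℕ → Matrix (Fin n) (Fin n) ℝ)
    (hWnonneg : ∀ k i j, 0 ≤ W k i j)
    (hWrow : ∀ k i, ∑ j, W k i j = 1)
    (D : ℝ) (hD : 0 ≤ D)
    (ι : ℕ → ℝ) (hιnonneg : ∀ k, 0 ≤ ι k)
    (x q : ℕ → Fin n → EuclideanSpace ℝ (Fin p))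
    (hrec : ∀ k, ∀ i, x (k + 1) i = (∑ j, W k i j • x k j) + q (k + 1) i)
    (hq : ∀ k, ∀ i, ‖q (k + 1) i‖ ≤ ι k * D) :
    ∀ k m i, ‖x (k + m) i - ∑ l, prodW W k m i l • x k l‖
      ≤ (∑ s ∈ Finset.range m, ι (k + s)) * D := by
  intro k m
  induction m with
  | zero =>
    intro i
    have : ∑ l, prodW W k 0 i l • x k l = x k i := by
      simp [prodW, Matrix.one_apply, ite_smul]
    simp [this]
  | succ m ih =>
    intro i
    have hx : x (k + (m + 1)) i
        = (∑ j, W (k + m) i j • x (k + m) j) + q ((k + m) + 1) i := by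
      rw [show k + (m + 1) = (k + m) + 1 by ring]
      exact hrec (k + m) i
    have hswap : ∑ l, prodW W k (m+1) i l • x k l
        = ∑ j, W (k+m) i j • ∑ l, prodW W k m j l • x k l := by
      have h1 : ∀ l, prodW W k (m+1) i l = ∑ j, W (k+m) i j * prodW W k m j l := by
        intro l
        show (W (k+m) * prodW W k m) i l = _
        rw [Matrix.mul_apply]
      calc ∑ l, prodW W k (m+1) i l • x k l
          = ∑ l, ∑ j, (W (k+m) i j * prodW W k m j l) • x k l := by
            simp_rw [h1, Finset.sum_smul]
        _ = ∑ j, ∑ l, (W (k+m) i j * prodW W k m j l) • x k l := Finset.sum_comm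
        _ = ∑ j, W (k+m) i j • ∑ l, prodW W k m j l • x k l := by
            simp_rw [Finset.smul_sum, smul_smul]
    have hdiff : x (k + (m+1)) i - ∑ l, prodW W k (m+1) i l • x k l
        = (∑ j, W (k+m) i j • (x (k+m) j - ∑ l, prodW W k m j l • x k l))
          + q ((k+m)+1) i := by
      rw [hx, hswap]
      simp_rw [smul_sub, Finset.sum_sub_distrib]
      abel
    rw [hdiff]
    calc ‖(∑ j, W (k+m) i j • (x (k+m) j - ∑ l, prodW W k m j l • x k l))
          + q ((k+m)+1) i‖
        ≤ ‖∑ j, W (k+m) i j • (x (k+m) j - ∑ l, prodW W k m j l • x k l)‖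
          + ‖q ((k+m)+1) i‖ := norm_add_le _ _
      _ ≤ (∑ j, W (k+m) i j * ((∑ s ∈ Finset.range m, ι (k + s)) * D))
          + ι (k+m) * D := by
          refine add_le_add ?_ (hq (k+m) i)
          refine (norm_sum_le _ _).trans (Finset.sum_le_sum fun j _ => ?_)
          rw [norm_smul, Real.norm_eq_abs, abs_of_nonneg (hWnonneg _ _ _)]
          exact mul_le_mul_of_nonneg_left (ih j) (hWnonneg _ _ _)
      _ = (∑ s ∈ Finset.range (m+1), ι (k + s)) * D := by
          rw [← Finset.sum_mul, hWrow, Finset.sum_range_succ]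
          ring

/-- Lemma 9 (deterministic form): perturbed consensus with vanishing perturbations
achieves consensus. If `xᵢ(k+1) = Σⱼ W(k)ᵢⱼ xⱼ(k) + pᵢ(k+1)` with `‖pᵢ(k+1)‖ ≤ ι(k)·D`
and `ι(k) → 0`, then `‖xᵢ(k) − x̄(k)‖ → 0` for every `i`. -/
theorem perturbed_consensus_achieves_consensus
    {p n : ℕ} (hn : 0 < n)
    (η : ℝ) (hη : η ∈ Set.Ioo (0 : ℝ) 1) (κ : ℕ) (hκ : 1 ≤ κ)
    (W : ℕ → Matrix (Fin n) (Fin n) ℝ)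
    (hWnonneg : ∀ k i j, 0 ≤ W k i j)
    (hWrow : ∀ k i, ∑ j, W k i j = 1)
    (hWcol : ∀ k j, ∑ i, W k i j = 1)
    (hWdiag : ∀ k i, η ≤ W k i i)
    (hWpos : ∀ k i j, W k i j ≠ 0 → η ≤ W k i j)
    (hWconn : ∀ k, ∀ i j : Fin n, ∃ s, k ≤ s ∧ s < k + κ ∧ η ≤ W s i j)
    (D : ℝ) (hD : 0 ≤ D)
    (ι : ℕ → ℝ) (hιnonneg : ∀ k, 0 ≤ ι k)
    (hι : Tendsto ι atTop (nhds 0))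
    (x q : ℕ → Fin n → EuclideanSpace ℝ (Fin p))
    (hrec : ∀ k, ∀ i, x (k + 1) i = (∑ j, W k i j • x k j) + q (k + 1) i)
    (hq : ∀ k, ∀ i, ‖q (k + 1) i‖ ≤ ι k * D) :
    ∀ i : Fin n,
      Tendsto (fun k => ‖x k i - (n : ℝ)⁻¹ • ∑ j, x k j‖) atTop (nhds 0) := by
  intro i
  haveI hnE : Nonempty (Fin n) := ⟨⟨0, hn⟩⟩
  set δ : ℝ := η ^ κ with hδ
  have hδ0 : 0 < δ := pow_pos hη.1 κ
  set γ : ℝ := 1 - n * δ with hγ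
  have hΦnn : ∀ k m i j, 0 ≤ prodW W k m i j :=
    fun k m i j => prodW_nonneg W hWnonneg k m i j
  have hΦrow : ∀ k m i, ∑ j, prodW W k m i j = 1 :=
    fun k m i => prodW_row W hWrow k m i
  have hΦge : ∀ k i' j', δ ≤ prodW W k κ i' j' :=
    fun k i' j' => prodW_entry_ge W hη hκ hWnonneg hWdiag hWconn k i' j'
  have hnδ : (n : ℝ) * δ ≤ 1 := by
    calc (n : ℝ) * δ = ∑ _j : Fin n, δ := by
          rw [Finset.sum_const, Finset.card_univ, Fintype.card_fin, nsmul_eq_mul]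
      _ ≤ ∑ j, prodW W 0 κ i j := Finset.sum_le_sum fun j _ => hΦge 0 i j
      _ = 1 := hΦrow 0 κ i
  have hγ0 : 0 ≤ γ := by rw [hγ]; linarith
  have hγ1 : γ < 1 := by
    have hn' : (0 : ℝ) < n := by exact_mod_cast hn
    have : 0 < (n : ℝ) * δ := mul_pos hn' hδ0
    rw [hγ]; linarith
  -- the spread function
  set V : ℕ → ℝ := fun k =>
    Finset.univ.sup' Finset.univ_nonempty
      (fun ij : Fin n × Fin n => ‖x k ij.1 - x k ij.2‖) with hV
  have hVle : ∀ k l m, ‖x k l - x k m‖ ≤ V k := fun k l m =>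
    Finset.le_sup' (f := fun ij : Fin n × Fin n => ‖x k ij.1 - x k ij.2‖)
      (Finset.mem_univ (l, m))
  have hV0 : ∀ k, 0 ≤ V k := fun k => (norm_nonneg _).trans (hVle k i i)
  -- error bound
  have hE := state_decomp W hWnonneg hWrow D hD ι hιnonneg x q hrec hq
  set e : ℕ → ℝ := fun k => 2 * ((∑ s ∈ Finset.range κ, ι (k + s)) * D) with he'
  -- contraction
  have hcontr : ∀ k, V (k + κ) ≤ γ * V k + e k := by
    intro k
    refine Finset.sup'_le _ _ fun ij _ => ?_
    obtain ⟨a, b⟩ := ij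
    set Φ : Matrix (Fin n) (Fin n) ℝ := prodW W k κ with hΦ
    set A : Fin n → EuclideanSpace ℝ (Fin p) := fun i' => ∑ l, Φ i' l • x k l with hA
    set c : Fin n → ℝ := fun l => Φ a l - min (Φ a l) (Φ b l) with hc'
    set d : Fin n → ℝ := fun l => Φ b l - min (Φ a l) (Φ b l) with hd'
    set t : ℝ := 1 - ∑ l, min (Φ a l) (Φ b l) with ht'
    have hc : ∀ l, 0 ≤ c l := fun l => sub_nonneg.2 (min_le_left _ _)
    have hd : ∀ l, 0 ≤ d l := fun l => sub_nonneg.2 (min_le_right _ _)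
    have hct : ∑ l, c l = t := by
      rw [hc', ht', Finset.sum_sub_distrib, hΦrow]
    have hdt : ∑ l, d l = t := by
      rw [hd', ht', Finset.sum_sub_distrib, hΦrow]
    have hAB : A a - A b = (∑ l, c l • x k l) - ∑ l, d l • x k l := by
      rw [hA]
      simp_rw [← Finset.sum_sub_distrib, ← sub_smul]
      refine Finset.sum_congr rfl fun l _ => ?_
      congr 1
      rw [hc', hd']
      ring
    have hABle : ‖A a - A b‖ ≤ t * V k := by
      rw [hAB]
      exact pairing_bound c d hc hd t hct hdt (x k) (V k) (fun l m => hVle k l m)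
    have htγ : t ≤ γ := by
      rw [ht', hγ]
      have : (n : ℝ) * δ ≤ ∑ l, min (Φ a l) (Φ b l) := by
        calc (n : ℝ) * δ = ∑ _l : Fin n, δ := by
              rw [Finset.sum_const, Finset.card_univ, Fintype.card_fin, nsmul_eq_mul]
          _ ≤ ∑ l, min (Φ a l) (Φ b l) :=
              Finset.sum_le_sum fun l _ => le_min (hΦge k a l) (hΦge k b l)
      linarith
    have hRa : ‖x (k + κ) a - A a‖ ≤ (∑ s ∈ Finset.range κ, ι (k + s)) * D := hE k κ a
    have hRb : ‖x (k + κ) b - A b‖ ≤ (∑ s ∈ Finset.range κ, ι (k + s)) * D := hE k κ b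
    have hsplit : x (k + κ) a - x (k + κ) b
        = (A a - A b) + ((x (k + κ) a - A a) - (x (k + κ) b - A b)) := by abel
    calc ‖x (k + κ) a - x (k + κ) b‖
        ≤ ‖A a - A b‖ + (‖x (k + κ) a - A a‖ + ‖x (k + κ) b - A b‖) := by
          rw [hsplit]
          exact (norm_add_le _ _).trans (add_le_add le_rfl (norm_sub_le _ _))
      _ ≤ γ * V k + (((∑ s ∈ Finset.range κ, ι (k + s)) * D)
            + ((∑ s ∈ Finset.range κ, ι (k + s)) * D)) := by
          refine add_le_add (hABle.trans (mul_le_mul_of_nonneg_right htγ (hV0 k)))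
            (add_le_add hRa hRb)
      _ = γ * V k + e k := by rw [he']; ring
  -- e tends to 0
  have he : Tendsto e atTop (nhds 0) := by
    have hsum : Tendsto (fun k => ∑ s ∈ Finset.range κ, ι (k + s)) atTop (nhds 0) := by
      have h := tendsto_finset_sum (Finset.range κ)
        (fun s _ => hι.comp (tendsto_add_atTop_nat s))
      simpa using h
    have := (hsum.mul_const D).const_mul 2
    simpa using this
  -- conclude spread → 0
  have hVtend : Tendsto V atTop (nhds 0) :=
    contraction_tendsto κ hκ γ hγ0 hγ1 V e hV0 he hcontr
  -- final bound
  refine squeeze_zero (fun k => norm_nonneg _) (fun k => ?_) hVtend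
  have hrepr : x k i - (n : ℝ)⁻¹ • ∑ j, x k j = (n : ℝ)⁻¹ • ∑ j, (x k i - x k j) := by
    rw [Finset.sum_sub_distrib, smul_sub, Finset.sum_const, Finset.card_univ,
      Fintype.card_fin, ← Nat.cast_smul_eq_nsmul ℝ, smul_smul,
      inv_mul_cancel₀ (by exact_mod_cast hn.ne' : (n : ℝ) ≠ 0), one_smul]
  rw [hrepr, norm_smul, Real.norm_eq_abs, abs_of_nonneg (by positivity)]
  calc (n : ℝ)⁻¹ * ‖∑ j, (x k i - x k j)‖
      ≤ (n : ℝ)⁻¹ * ∑ j, ‖x k i - x k j‖ :=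
        mul_le_mul_of_nonneg_left (norm_sum_le _ _) (by positivity)
    _ ≤ (n : ℝ)⁻¹ * ∑ _j : Fin n, V k :=
        mul_le_mul_of_nonneg_left (Finset.sum_le_sum fun j _ => hVle k i j) (by positivity)
    _ = V k := by
        rw [Finset.sum_const, Finset.card_univ, Fintype.card_fin, nsmul_eq_mul,
          ← mul_assoc, inv_mul_cancel₀ (by exact_mod_cast hn.ne' : (n : ℝ) ≠ 0), one_mul]
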